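/- For any two orthogonal projectors X and Y on a finite-dimensional Hilbert space, the operator norm satisfies ‖X + Y‖ ≤ 1 + ‖X Y‖. -/

import Mathlib

set_option maxHeartbeats 1000000


/-- For any two orthogonal projectors `X` and `Y` on a finite-dimensional Hilbert space,
the operator norm satisfies `‖X + Y‖ ≤ 1 + ‖X ∘L Y‖`. -/
theorem stmt0 {n : ℕ}
    (X Y : EuclideanSpace ℂ (Fin n) →L[ℂ] EuclideanSpace ℂ (Fin n))
    (hX1 : ContinuousLinearMap.adjoint X = X) (hX2 : X ∘L X = X)
    (hY1 : ContinuousLinearMap.adjoint Y = Y) (hY2 : Y ∘L Y = Y) :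
    ‖X + Y‖ ≤ 1 + ‖X ∘L Y‖ := by
  classical
  set E := EuclideanSpace ℂ (Fin n)
  by_cases ht : ‖X + Y‖ ≤ 1
  · have h0 : (0:ℝ) ≤ ‖X ∘L Y‖ := norm_nonneg _
    linarith
  push_neg at ht
  set t : ℝ := ‖X + Y‖ with htdef
  have ht1 : (1:ℝ) < t := ht
  -- E is nontrivial
  have hnt : Nontrivial E := by
    by_contra h
    rw [not_nontrivial_iff_subsingleton] at h
    have : X + Y = 0 := by
      apply ContinuousLinearMap.ext
      intro x
      exact Subsingleton.elim _ _
    rw [this, norm_zero] at htdef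
    linarith
  have hntL : Nontrivial (E →L[ℂ] E) := by
    refine ⟨1, 0, fun h => ?_⟩
    obtain ⟨x, hx⟩ := exists_ne (0 : E)
    have := DFunLike.congr_fun h x
    simp at this
    exact hx this
  set T : E →L[ℂ] E := X + Y with hTdef
  have hTsa : IsSelfAdjoint T := by
    rw [IsSelfAdjoint, ContinuousLinearMap.star_eq_adjoint, hTdef, map_add, hX1, hY1]
  -- X and Y applied twice
  have hXX : ∀ x : E, X (X x) = X x := fun x => DFunLike.congr_fun hX2 x
  have hYY : ∀ x : E, Y (Y x) = Y x := fun x => DFunLike.congr_fun hY2 x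
  -- positivity of T
  have hTpos : T.IsPositive := by
    refine ContinuousLinearMap.isPositive_def'.mpr ⟨hTsa, fun x => ?_⟩
    have hx : ∀ (P : E →L[ℂ] E), ContinuousLinearMap.adjoint P = P →
        (∀ y, P (P y) = P y) → inner ℂ (P x) x = (inner ℂ (P x) (P x) : ℂ) := by
      intro P hP1 hP2
      conv_lhs => rw [← hP2 x]
      rw [← ContinuousLinearMap.adjoint_inner_right P (P x) x, hP1]
    rw [ContinuousLinearMap.reApplyInnerSelf]
    have : inner ℂ (T x) x = (inner ℂ (X x) (X x) : ℂ) + inner ℂ (Y x) (Y x) := by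
      rw [hTdef]
      simp only [ContinuousLinearMap.add_apply]
      erw [inner_add_left]
      rw [hx X hX1 hXX, hx Y hY1 hYY]
    rw [this]
    simp only [map_add, inner_self_eq_norm_sq]
    positivity
  have hTnn : (0:(E →L[ℂ] E)) ≤ T := (ContinuousLinearMap.nonneg_iff_isPositive T).mpr hTpos
  -- the norm is in the spectrum
  have hspecR : t ∈ spectrum ℝ T := CStarAlgebra.norm_mem_spectrum_of_nonneg hTnn
  have hspec : (t : ℂ) ∈ spectrum ℂ T := by
    have := spectrum.algebraMap_mem ℂ hspecR
    simpa using this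
  -- get an eigenvector
  rw [spectrum.mem_iff] at hspec
  have hnotbij : ¬ Function.Bijective (algebraMap ℂ (E →L[ℂ] E) (t:ℂ) - T) := by
    intro hbij
    exact hspec (ContinuousLinearMap.isUnit_iff_bijective.mpr hbij)
  have hnotinj : ¬ Function.Injective (algebraMap ℂ (E →L[ℂ] E) (t:ℂ) - T) := by
    intro hinj
    exact hnotbij ⟨hinj,
      (LinearMap.injective_iff_surjective (f := ((algebraMap ℂ (E →L[ℂ] E) (t:ℂ) - T)
        : E →ₗ[ℂ] E))).mp hinj⟩
  obtain ⟨a, b, hab, hne⟩ : ∃ a b, (algebraMap ℂ (E →L[ℂ] E) (t:ℂ) - T) a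
      = (algebraMap ℂ (E →L[ℂ] E) (t:ℂ) - T) b ∧ a ≠ b := by
    by_contra h
    push_neg at h
    exact hnotinj fun a b hab => h a b hab
  set v : E := a - b with hvdef
  have hv0 : v ≠ 0 := sub_ne_zero_of_ne hne
  have hveq : T v = (t:ℂ) • v := by
    have : (algebraMap ℂ (E →L[ℂ] E) (t:ℂ) - T) v = 0 := by
      rw [hvdef, map_sub, hab, sub_self]
    have h2 : (algebraMap ℂ (E →L[ℂ] E) (t:ℂ)) v - T v = 0 := by
      simpa [ContinuousLinearMap.sub_apply] using this
    have h3 : (algebraMap ℂ (E →L[ℂ] E) (t:ℂ)) v = (t:ℂ) • v := by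
      rw [Algebra.algebraMap_eq_smul_one]
      simp
    rw [h3] at h2
    exact (sub_eq_zero.mp h2).symm
  have hv : X v + Y v = (t:ℂ) • v := by
    simpa [hTdef, ContinuousLinearMap.add_apply] using hveq
  have h1 : X (Y v) = ((t:ℂ) - 1) • X v := by
    have h := congrArg X hv
    rw [map_add, hXX, map_smul] at h
    have : X (Y v) = (t:ℂ) • X v - X v := by
      rw [← h]; abel
    rw [this, sub_smul, one_smul]
  have h2 : Y (X v) = ((t:ℂ) - 1) • Y v := by
    have h := congrArg Y hv
    rw [map_add, hYY, map_smul] at h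
    have : Y (X v) = (t:ℂ) • Y v - Y v := by
      rw [← h]; abel
    rw [this, sub_smul, one_smul]
  have hXvne : X v ≠ 0 := by
    intro hx0
    rw [hx0, zero_add] at hv
    have hy := congrArg Y hv
    rw [hYY, map_smul, hv, smul_smul] at hy
    have : (((t:ℂ) * t - t)) • v = 0 := by
      rw [sub_smul, ← hy, sub_self]
    rcases smul_eq_zero.mp this with hc | hv0'
    · have : (t:ℝ) * t - t = 0 := by exact_mod_cast hc
      nlinarith
    · exact hv0 hv0'
  -- Xv is an eigenvector of X∘Y∘X with eigenvalue (t-1)^2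
  have key : (X ∘L (Y ∘L X)) (X v) = (((t:ℂ) - 1)^2) • X v := by
    simp only [ContinuousLinearMap.comp_apply, hXX, h2, map_smul, h1, smul_smul]
    ring_nf
  have hA : (X ∘L (Y ∘L X)) = ContinuousLinearMap.adjoint (Y ∘L X) ∘L (Y ∘L X) := by
    rw [ContinuousLinearMap.adjoint_comp, hX1, hY1]
    rw [ContinuousLinearMap.comp_assoc, ← ContinuousLinearMap.comp_assoc Y Y X, hY2]
  have hnormA : ‖X ∘L (Y ∘L X)‖ = ‖Y ∘L X‖ * ‖Y ∘L X‖ := by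
    rw [hA, ContinuousLinearMap.norm_adjoint_comp_self]
  have hYX : Y ∘L X = ContinuousLinearMap.adjoint (X ∘L Y) := by
    rw [ContinuousLinearMap.adjoint_comp, hX1, hY1]
  have hYXnorm : ‖Y ∘L X‖ = ‖X ∘L Y‖ := by
    rw [hYX, ContinuousLinearMap.adjoint.norm_map]
  have hineq := (X ∘L (Y ∘L X)).le_opNorm (X v)
  rw [key] at hineq
  have hnormsmul : ‖(((t:ℂ) - 1)^2) • X v‖ = (t - 1)^2 * ‖X v‖ := by
    rw [norm_smul]
    congr 1
    have : ((t:ℂ) - 1)^2 = (((t-1)^2 : ℝ) : ℂ) := by push_cast; ring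
    rw [this, Complex.norm_real]
    exact Real.norm_of_nonneg (by positivity)
  rw [hnormsmul, hnormA, hYXnorm] at hineq
  have hXvpos : 0 < ‖X v‖ := norm_pos_iff.mpr hXvne
  have hsq : (t - 1)^2 ≤ ‖X ∘L Y‖ * ‖X ∘L Y‖ := by
    have := mul_le_mul_of_nonneg_right hineq (le_refl (0:ℝ))
    nlinarith [hineq, hXvpos]
  have hc : (0:ℝ) ≤ ‖X ∘L Y‖ := norm_nonneg _
  nlinarith [hsq, hc, ht1]
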